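/- Let k be an algebraically closed field (char ≠ 2). The ıTaft algebra H₂ⁱ(q), the 4-dimensional commutative algebra with basis d₁,d₂,d₃,d₄, unit d₁, and relations d₂⋄d₂ = −d₁, d₃⋄d₃ = d₂, d₂⋄d₃ = −d₄, d₂⋄d₄ = d₃, d₃⋄d₄ = d₁, d₄⋄d₄ = −d₂, is isomorphic as a k-algebra to the group algebra k[ℤ/4ℤ]. Explicitly, if v ∈ k satisfies v⁴ = −1, then v·d₃ generates H₂ⁱ(q) with (v d₃)⁴ = d₁. -/

import Mathlib

/-- Basis vector `d_{i+1}` of the `ı`Taft algebra, in coordinates. -/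
def iTaftBasis (k : Type*) [Field k] (i : Fin 4) : Fin 4 → k := Pi.single i 1

/-- The multiplication table of the `ı`Taft algebra `H₂ⁱ(q)` in the basis
`d₁, d₂, d₃, d₄` (indices `0,1,2,3`): `d₁` unit, `d₂⋄d₂ = -d₁`, `d₂⋄d₃ = -d₄`,
`d₂⋄d₄ = d₃`, `d₃⋄d₃ = d₂`, `d₃⋄d₄ = d₁`, `d₄⋄d₄ = -d₂` (commutative). -/
def iTaftTable (k : Type*) [Field k] : Fin 4 → Fin 4 → (Fin 4 → k) :=
  ![![iTaftBasis k 0, iTaftBasis k 1, iTaftBasis k 2, iTaftBasis k 3],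
    ![iTaftBasis k 1, -iTaftBasis k 0, -iTaftBasis k 3, iTaftBasis k 2],
    ![iTaftBasis k 2, -iTaftBasis k 3, iTaftBasis k 1, iTaftBasis k 0],
    ![iTaftBasis k 3, iTaftBasis k 2, iTaftBasis k 0, -iTaftBasis k 1]]

/-- The (bilinear) multiplication of the `ı`Taft algebra `H₂ⁱ(q)` in coordinates. -/
def iTaftMul (k : Type*) [Field k] (a b : Fin 4 → k) : Fin 4 → k :=
  fun p => ∑ i, ∑ j, a i * b j * iTaftTable k i j p

section Aux

variable {k : Type*} [Field k]

@[simp] lemma ama_add_apply (a b : AddMonoidAlgebra k (ZMod 4)) (j : ZMod 4) :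
    (a + b).coeff j = a.coeff j + b.coeff j := Finsupp.add_apply _ _ j

@[simp] lemma ama_smul_apply (c : k) (a : AddMonoidAlgebra k (ZMod 4)) (j : ZMod 4) :
    (c • a).coeff j = c * a.coeff j := Finsupp.smul_apply c _ j

@[simp] lemma ama_neg_apply (a : AddMonoidAlgebra k (ZMod 4)) (j : ZMod 4) :
    (-a).coeff j = -(a.coeff j) := Finsupp.neg_apply _ j

@[simp] lemma ama_sub_apply (a b : AddMonoidAlgebra k (ZMod 4)) (j : ZMod 4) :
    (a - b).coeff j = a.coeff j - b.coeff j := Finsupp.sub_apply _ _ j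

@[simp] lemma ama_zero_apply (j : ZMod 4) : (0 : AddMonoidAlgebra k (ZMod 4)).coeff j = 0 :=
  Finsupp.zero_apply

@[simp] lemma ama_single_apply (i : ZMod 4) (c : k) (j : ZMod 4) :
    (AddMonoidAlgebra.single i c).coeff j = if i = j then c else 0 := Finsupp.single_apply

@[simp] lemma vecHead_const {n : ℕ} (c : k) :
    Matrix.vecHead (fun _ : Fin (n+1) => c) = c := rfl

@[simp] lemma vecTail_const {n : ℕ} (c : k) :
    Matrix.vecTail (fun _ : Fin (n+1) => c) = fun _ : Fin n => c := rfl

/-- The images of the basis vectors `d₁, d₂, d₃, d₄` in `k[ℤ/4ℤ]`, where `u⁴ = -1`. -/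
noncomputable def iE (u : k) : Fin 4 → AddMonoidAlgebra k (ZMod 4) :=
  ![AddMonoidAlgebra.single 0 1, AddMonoidAlgebra.single 2 (u^2),
    AddMonoidAlgebra.single 1 u, AddMonoidAlgebra.single 3 (-(u^3))]

/-- The comparison linear map `H₂ⁱ(q) → k[ℤ/4ℤ]`. -/
noncomputable def iF (u : k) : (Fin 4 → k) →ₗ[k] AddMonoidAlgebra k (ZMod 4) where
  toFun a := ∑ i, a i • iE u i
  map_add' a b := by simp [add_smul, Finset.sum_add_distrib]
  map_smul' c a := by simp [smul_smul, Finset.smul_sum]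

/-- The inverse comparison linear map `k[ℤ/4ℤ] → H₂ⁱ(q)`. -/
noncomputable def iG (u : k) : AddMonoidAlgebra k (ZMod 4) →ₗ[k] (Fin 4 → k) where
  toFun b := ![b.coeff 0, -(u^2) * b.coeff 2, -(u^3) * b.coeff 1, u * b.coeff 3]
  map_add' a b := by funext i; fin_cases i <;> simp <;> ring
  map_smul' c a := by funext i; fin_cases i <;> simp <;> ring

lemma hGF (u : k) (hu : u ^ 4 = -1) : ∀ a, iG u (iF u a) = a := by
  intro a
  funext i
  fin_cases i <;>
    simp +decide [iF, iG, iE, Fin.sum_univ_four, -mul_eq_zero] <;>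
    first
      | linear_combination -a 1 * hu
      | linear_combination -a 2 * hu
      | linear_combination -a 3 * hu
      | ring

lemma hFG (u : k) (hu : u ^ 4 = -1) : ∀ b, iF u (iG u b) = b := by
  intro b
  ext j
  simp [iF, iG, iE, Fin.sum_univ_four, -mul_eq_zero, -AddMonoidAlgebra.coeff_add, -AddMonoidAlgebra.coeff_neg, -AddMonoidAlgebra.coeff_sub, -AddMonoidAlgebra.coeff_smul, -AddMonoidAlgebra.coeff_single]
  rcases (by decide +revert : j = 0 ∨ j = 1 ∨ j = 2 ∨ j = 3) with rfl | rfl | rfl | rfl <;>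
    simp +decide [iF, iG, iE, Fin.sum_univ_four, -mul_eq_zero, -AddMonoidAlgebra.coeff_add, -AddMonoidAlgebra.coeff_neg, -AddMonoidAlgebra.coeff_sub, -AddMonoidAlgebra.coeff_smul, -AddMonoidAlgebra.coeff_single] <;>
    first
      | linear_combination -b.coeff 1 * hu
      | linear_combination -b.coeff 2 * hu
      | linear_combination -b.coeff 3 * hu
      | ring

lemma iF_def (u : k) (x : Fin 4 → k) :
    iF u x = AddMonoidAlgebra.single 0 (x 0) + AddMonoidAlgebra.single 2 (u^2 * x 1)
      + AddMonoidAlgebra.single 1 (u * x 2) + AddMonoidAlgebra.single 3 (-(u^3) * x 3) := by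
  ext j
  simp [iF, iE, Fin.sum_univ_four, mul_comm]

set_option maxHeartbeats 1000000 in
lemma hmul (u : k) (hu : u ^ 4 = -1) (a b : Fin 4 → k) :
    iF u (iTaftMul k a b) = iF u a * iF u b := by
  have z22 : (2 + 2 : ZMod 4) = 0 := by decide
  have z23 : (2 + 1 : ZMod 4) = 3 := by decide
  have z33 : (1 + 1 : ZMod 4) = 2 := by decide
  have z13 : (2 + 3 : ZMod 4) = 1 := by decide
  have z32 : (1 + 2 : ZMod 4) = 3 := by decide
  have z34 : (1 + 3 : ZMod 4) = 0 := by decide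
  have z43 : (3 + 1 : ZMod 4) = 0 := by decide
  have z42 : (3 + 2 : ZMod 4) = 1 := by decide
  have z44 : (3 + 3 : ZMod 4) = 2 := by decide
  have z02 : (0 + 2 : ZMod 4) = 2 := by decide
  have hab : iTaftMul k a b = ![a 0 * b 0 - a 1 * b 1 + a 2 * b 3 + a 3 * b 2,
      a 0 * b 1 + a 1 * b 0 + a 2 * b 2 - a 3 * b 3,
      a 0 * b 2 + a 2 * b 0 + a 1 * b 3 + a 3 * b 1,
      a 0 * b 3 + a 3 * b 0 - a 1 * b 2 - a 2 * b 1] := by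
    funext p
    fin_cases p <;>
      simp [iTaftMul, iTaftTable, iTaftBasis, Fin.sum_univ_four, Pi.single, Function.update,
        -mul_eq_zero] <;>
      ring
  rw [hab, iF_def, iF_def, iF_def]
  simp only [add_mul, mul_add, AddMonoidAlgebra.single_mul_single,
    z22, z23, z33, z13, z32, z34, z43, z42, z44, z02, zero_add, add_zero]
  have h5 : u ^ 5 = -u := by linear_combination u * hu
  have h6 : u ^ 6 = -(u^2) := by linear_combination u^2 * hu
  have h7 : u ^ 7 = -(u^3) := by linear_combination u^3 * hu
  have h8 : u ^ 8 = 1 := by linear_combination (u^4 - 1) * hu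
  ext j
  simp only [ama_add_apply, ama_sub_apply, ama_neg_apply, ama_single_apply]
  rcases (by decide +revert : j = 0 ∨ j = 1 ∨ j = 2 ∨ j = 3) with rfl | rfl | rfl | rfl <;>
    simp +decide [Matrix.vecHead, Matrix.vecTail, -mul_eq_zero, -AddMonoidAlgebra.coeff_add, -AddMonoidAlgebra.coeff_neg, -AddMonoidAlgebra.coeff_sub, -AddMonoidAlgebra.coeff_smul, -AddMonoidAlgebra.coeff_single] <;>
    ring_nf <;>
    simp only [hu, h5, h6, h7, h8] <;>
    ring

lemma hone (u : k) : iF u (iTaftBasis k 0) = 1 := by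
  rw [iF_def]
  simp [iTaftBasis, Pi.single, Function.update, AddMonoidAlgebra.one_def]

end Aux

/-- Proposition 5.2: over an algebraically closed field (char ≠ 2), the `ı`Taft algebra
`H₂ⁱ(q)` is isomorphic to the group algebra of `ℤ/4ℤ`: there is a linear equivalence
intertwining multiplications and units; explicitly, any `v` with `v⁴ = -1` gives
`(v • d₃)⁴ = d₁`. -/
theorem iTaft_iso_group_algebra (k : Type*) [Field k] [IsAlgClosed k] (h2 : (2 : k) ≠ 0) :
    (∃ f : (Fin 4 → k) ≃ₗ[k] AddMonoidAlgebra k (ZMod 4),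
      (∀ a b, f (iTaftMul k a b) = f a * f b) ∧ f (iTaftBasis k 0) = 1) ∧
    (∀ v : k, v ^ 4 = -1 →
      iTaftMul k (iTaftMul k (iTaftMul k (v • iTaftBasis k 2) (v • iTaftBasis k 2))
        (v • iTaftBasis k 2)) (v • iTaftBasis k 2) = iTaftBasis k 0) := by
  constructor
  · obtain ⟨u, hu⟩ := IsAlgClosed.exists_pow_nat_eq (-1 : k) (n := 4) (by norm_num)
    refine ⟨{ iF u with invFun := iG u, left_inv := hGF u hu, right_inv := hFG u hu },
      fun a b => hmul u hu a b, hone u⟩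
  · intro v hv
    funext p
    fin_cases p <;>
      simp [iTaftMul, iTaftTable, iTaftBasis, Fin.sum_univ_four, Pi.single, Function.update,
        Matrix.vecHead, Matrix.vecTail, -mul_eq_zero] <;>
      first
        | linear_combination (v^2 - 1) * hv
        | linear_combination -v^2 * hv
        | linear_combination v^2 * hv
        | linear_combination hv
        | linear_combination -hv
        | ring
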